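/- Let C be a triangulated category with a t-structure, let Y be an object with an endomorphism \phi: Y \to Y[k] (k > 0) such that the iterated composition \phi^{2^n} := \phi[(2^n - 1)k] \circ \cdots \circ \phi[k] \circ \phi vanishes for n sufficiently large, and suppose Cone(\phi) \in C^{\le -1} and Cone(\phi[k]) \in C^{\le -1}. Then for all n \ge 1, Cone(\phi^{2^n}) \in C^{\le -1}; consequently Y[1] \oplus Y[2^n k] \in C^{\le -1} for large n, and hence Y \in C^{\le 0}. -/

import Mathlib

open CategoryTheory Limits Pretriangulated Triangulated

variable {C : Type*} [Category C] [Preadditive C] [HasZeroObject C] [HasShift C ℤ]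
  [∀ n : ℤ, (shiftFunctor C n).Additive] [Pretriangulated C]

/-- Given `φ : Y ⟶ Y⟦k⟧`, this is the shifted map `φ⟦m⟧ : Y⟦m⟧ ⟶ Y⟦m + k⟧`. -/
noncomputable def shiftMapBy {Y : C} (k : ℤ) (φ : Y ⟶ Y⟦k⟧) (m : ℤ) : Y⟦m⟧ ⟶ Y⟦m + k⟧ :=
  φ⟦m⟧' ≫ (shiftFunctorAdd' C k m (m + k) (add_comm k m)).inv.app Y

/-- The iterated composition `φ^m := φ[(m-1)k] ∘ ⋯ ∘ φ[k] ∘ φ : Y ⟶ Y⟦m * k⟧` of a map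
`φ : Y ⟶ Y⟦k⟧`. -/
noncomputable def iterMap {Y : C} (k : ℤ) (φ : Y ⟶ Y⟦k⟧) : (m : ℕ) → (Y ⟶ Y⟦(m : ℤ) * k⟧)
  | 0 => (shiftFunctorZero C ℤ).inv.app Y ≫
      eqToHom (congrArg (fun z => (shiftFunctor C z).obj Y)
        (by push_cast; ring : (0 : ℤ) = ((0 : ℕ) : ℤ) * k))
  | (m + 1) => iterMap k φ m ≫ shiftMapBy k φ ((m : ℤ) * k) ≫
      eqToHom (congrArg (fun z => (shiftFunctor C z).obj Y)
        (by push_cast; ring : (m : ℤ) * k + k = ((m + 1 : ℕ) : ℤ) * k))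

/-- Any map from an object `≤ a` to an object `≥ b` with `a < b` vanishes. -/
lemma tzero (t : TStructure C) {a b : ℤ} (h : a < b) {X B : C}
    (hX : t.le a X) (hB : t.ge b B) (f : X ⟶ B) : f = 0 := by
  have hX' : t.le 0 (X⟦a⟧) := t.le_shift a a 0 (by omega) X hX
  have hB' : t.ge (b - a) (B⟦a⟧) := t.ge_shift b a (b - a) (by omega) B hB
  have hB'' : t.ge 1 (B⟦a⟧) := t.ge_antitone (by omega) _ hB'
  have h0 : (shiftFunctor C a).map f = 0 := t.zero' _ hX' hB''
  apply (shiftFunctor C a).map_injective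
  simpa using h0

/-- An object left-orthogonal to all objects `≥ n+1` is `≤ n`. -/
lemma le_of_orthogonal (t : TStructure C) (n : ℤ) (W : C)
    (h : ∀ (B : C), t.ge (n + 1) B → ∀ (f : W ⟶ B), f = 0) : t.le n W := by
  obtain ⟨A, B, hA, hB, a, b, c, hT⟩ := t.exists_triangle W n (n + 1) rfl
  have hb : b = 0 := h B hB b
  obtain ⟨p, hp⟩ := Triangle.yoneda_exact₃ _ hT (𝟙 B) (by simp only [Triangle.mk_mor₂, hb]; exact zero_comp)
  have hp0 : p = 0 := tzero t (show n - 1 < n + 1 by omega)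
    (t.le_shift n 1 (n - 1) (by omega) A hA) hB p
  have hBzero : IsZero B := by
    rw [IsZero.iff_id_eq_zero, hp, hp0, comp_zero]; rfl
  have : IsIso ((Triangle.mk a b c).mor₁) :=
    (Triangle.isZero₃_iff_isIso₁ _ hT).1 hBzero
  exact (t.le n).prop_of_iso (@asIso _ _ _ _ ((Triangle.mk a b c).mor₁) this) hA

/-- Extension-closure: the middle term of a distinguished triangle whose outer terms
are `≤ n` is `≤ n`. -/
lemma le_ext (t : TStructure C) (n : ℤ) (T : Triangle C) (hT : T ∈ distTriang C)
    (h₁ : t.le n T.obj₁) (h₃ : t.le n T.obj₃) : t.le n T.obj₂ := by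
  apply le_of_orthogonal
  intro B hB f
  obtain ⟨g, hg⟩ := Triangle.yoneda_exact₂ _ hT f
    (tzero t (show n < n + 1 by omega) h₁ hB _)
  rw [hg, tzero t (show n < n + 1 by omega) h₃ hB g, comp_zero]

/-- Any map `Y ⟶ B` with `B ≥ 1` factors through `φ` when `Cone φ ≤ -1`. -/
lemma factor_step (t : TStructure C) (k : ℤ) {Y Z₁ : C} (φ : Y ⟶ Y⟦k⟧)
    (g₁ : Y⟦k⟧ ⟶ Z₁) (h₁ : Z₁ ⟶ Y⟦(1 : ℤ)⟧)
    (hT₁ : Triangle.mk φ g₁ h₁ ∈ distTriang C) (hZ₁ : t.le (-1) Z₁)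
    {B : C} (hB : t.ge 1 B) (f : Y ⟶ B) : ∃ g : Y⟦k⟧ ⟶ B, f = φ ≫ g := by
  have hT := inv_rot_of_distTriang _ hT₁
  have hle : t.le 0 (((invRotate C).obj (Triangle.mk φ g₁ h₁)).obj₁) :=
    t.le_shift (-1) (-1) 0 (by omega) Z₁ hZ₁
  obtain ⟨g, hg⟩ := Triangle.yoneda_exact₂ _ hT f
    (tzero t (show (0 : ℤ) < 1 by omega) hle hB _)
  exact ⟨g, hg⟩

/-- Any map `Y⟦m⟧ ⟶ B` with `B ≥ 1`, `m ≥ 0`, factors through `shiftMapBy k φ m`. -/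
lemma factor_shift (t : TStructure C) (k : ℤ) {Y Z₁ : C} (φ : Y ⟶ Y⟦k⟧)
    (g₁ : Y⟦k⟧ ⟶ Z₁) (h₁ : Z₁ ⟶ Y⟦(1 : ℤ)⟧)
    (hT₁ : Triangle.mk φ g₁ h₁ ∈ distTriang C) (hZ₁ : t.le (-1) Z₁)
    (m : ℤ) (hm : 0 ≤ m) {B : C} (hB : t.ge 1 B) (f : Y⟦m⟧ ⟶ B) :
    ∃ g : Y⟦m + k⟧ ⟶ B, f = shiftMapBy k φ m ≫ g := by
  have hB' : t.ge 1 (B⟦-m⟧) :=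
    t.ge_antitone (show (1 : ℤ) ≤ 1 + m by omega) _
      (t.ge_shift 1 (-m) (1 + m) (by omega) B hB)
  let e : B ≅ (B⟦(-m : ℤ)⟧)⟦m⟧ := ((shiftEquiv C m).counitIso.app B).symm
  set f₀ : Y ⟶ B⟦(-m : ℤ)⟧ := (shiftFunctor C m).preimage (f ≫ e.hom) with hf₀def
  have hf₀ : (shiftFunctor C m).map f₀ = f ≫ e.hom := Functor.map_preimage _ _
  obtain ⟨g₀, hg₀⟩ := factor_step t k φ g₁ h₁ hT₁ hZ₁ hB' f₀
  refine ⟨(shiftFunctorAdd' C k m (m + k) (add_comm k m)).hom.app Y ≫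
    g₀⟦m⟧' ≫ e.inv, ?_⟩
  rw [shiftMapBy]
  simp only [Category.assoc, Iso.inv_hom_id_app_assoc]
  rw [← Functor.map_comp_assoc, ← hg₀, hf₀]
  simp [e]
  exact (by simp only [Category.assoc, Iso.hom_inv_id, Category.comp_id] : f = (f ≫ e.hom) ≫ e.inv)

/-- Any map `Y ⟶ B` with `B ≥ 1` factors through `iterMap k φ m`. -/
lemma factor_iter (t : TStructure C) (k : ℤ) (hk : 0 < k) {Y Z₁ : C} (φ : Y ⟶ Y⟦k⟧)
    (g₁ : Y⟦k⟧ ⟶ Z₁) (h₁ : Z₁ ⟶ Y⟦(1 : ℤ)⟧)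
    (hT₁ : Triangle.mk φ g₁ h₁ ∈ distTriang C) (hZ₁ : t.le (-1) Z₁)
    {B : C} (hB : t.ge 1 B) (m : ℕ) (f : Y ⟶ B) :
    ∃ g : Y⟦(m : ℤ) * k⟧ ⟶ B, f = iterMap k φ m ≫ g := by
  induction m generalizing f with
  | zero =>
      have : IsIso (iterMap k φ (0 : ℕ) : Y ⟶ Y⟦((0 : ℕ) : ℤ) * k⟧) := by
        rw [iterMap]; infer_instance
      exact ⟨inv (iterMap k φ 0) ≫ f, by simp⟩
  | succ m ih =>
      obtain ⟨g, hg⟩ := ih f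
      obtain ⟨g', hg'⟩ := factor_shift t k φ g₁ h₁ hT₁ hZ₁ ((m : ℤ) * k)
        (by positivity) hB g
      refine ⟨eqToHom (congrArg (fun z => (shiftFunctor C z).obj Y)
        (by push_cast; ring : ((m + 1 : ℕ) : ℤ) * k = (m : ℤ) * k + k)) ≫ g', ?_⟩
      rw [iterMap]
      simp [hg, hg']

/-- Let `C` be a triangulated category with a t-structure, `Y` an object with a
map `φ : Y ⟶ Y⟦k⟧` (`k > 0`) such that the iterated composition `φ^{2^n}` vanishes for `n`
sufficiently large, and suppose `Cone(φ) ∈ C^{≤ -1}` and `Cone(φ⟦k⟧) ∈ C^{≤ -1}`. Then for all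
`n ≥ 1`, `Cone(φ^{2^n}) ∈ C^{≤ -1}`; consequently `Y⟦1⟧ ⊞ Y⟦2^n k⟧ ∈ C^{≤ -1}` for large `n`,
and hence `Y ∈ C^{≤ 0}`. -/
theorem mem_LE_zero_of_nilpotent_selfshift [HasBinaryBiproducts C]
    (t : TStructure C) (k : ℤ) (hk : 0 < k) (Y : C) (φ : Y ⟶ Y⟦k⟧)
    (hnil : ∃ N : ℕ, ∀ n ≥ N, iterMap k φ (2 ^ n) = 0)
    (Z₁ : C) (g₁ : Y⟦k⟧ ⟶ Z₁) (h₁ : Z₁ ⟶ Y⟦(1 : ℤ)⟧)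
    (hT₁ : Triangle.mk φ g₁ h₁ ∈ distTriang C) (hZ₁ : t.le (-1) Z₁)
    (Z₂ : C) (g₂ : Y⟦k + k⟧ ⟶ Z₂) (h₂ : Z₂ ⟶ (Y⟦k⟧)⟦(1 : ℤ)⟧)
    (hT₂ : Triangle.mk (shiftMapBy k φ k) g₂ h₂ ∈ distTriang C) (hZ₂ : t.le (-1) Z₂) :
    (∀ n : ℕ, 1 ≤ n → ∀ (Z : C) (g : Y⟦((2 ^ n : ℕ) : ℤ) * k⟧ ⟶ Z) (h : Z ⟶ Y⟦(1 : ℤ)⟧),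
        (Triangle.mk (iterMap k φ (2 ^ n)) g h ∈ distTriang C) → t.le (-1) Z) ∧
      (∃ N : ℕ, ∀ n ≥ N, t.le (-1) (Y⟦(1 : ℤ)⟧ ⊞ Y⟦((2 ^ n : ℕ) : ℤ) * k⟧)) ∧
      t.le 0 Y := by
  -- Main step: `Y ≤ 0`.
  have hY : t.le 0 Y := by
    apply le_of_orthogonal t 0 Y
    intro B hB f
    have hB' : t.ge 1 B := by simpa using hB
    obtain ⟨N, hN⟩ := hnil
    obtain ⟨g, hg⟩ := factor_iter t k hk φ g₁ h₁ hT₁ hZ₁ hB' (2 ^ N) f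
    rw [hg, hN N le_rfl, zero_comp]
  -- Shifts of `Y` are small.
  have hshift : ∀ (n : ℕ), t.le (-1) (Y⟦((2 ^ n : ℕ) : ℤ) * k⟧) := by
    intro n
    have h1 : (1 : ℤ) ≤ ((2 ^ n : ℕ) : ℤ) := by exact_mod_cast Nat.one_le_two_pow
    have h2 : (1 : ℤ) ≤ ((2 ^ n : ℕ) : ℤ) * k := by nlinarith
    exact t.le_monotone (show -(((2 ^ n : ℕ) : ℤ) * k) ≤ -1 by omega) _
      (t.le_shift 0 (((2 ^ n : ℕ) : ℤ) * k) (-(((2 ^ n : ℕ) : ℤ) * k)) (by omega) Y hY)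
  have hY1 : t.le (-1) (Y⟦(1 : ℤ)⟧) := t.le_shift 0 1 (-1) (by omega) Y hY
  refine ⟨?_, ⟨0, fun n _ => ?_⟩, hY⟩
  · intro n hn Z g h hT
    exact le_ext t (-1) _ (rot_of_distTriang _ hT) (hshift n) hY1
  · exact le_ext t (-1) _
      (binaryBiproductTriangle_distinguished (Y⟦(1 : ℤ)⟧) (Y⟦((2 ^ n : ℕ) : ℤ) * k⟧))
      hY1 (hshift n)
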